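/- Let H be a finite simple graph that is not a complete graph, has no induced subgraph isomorphic to the co-claw (the disjoint union of a triangle and one vertex), and has no induced subgraph isomorphic to the butterfly (two triangles sharing exactly one vertex, with no other edges). If G = KG(H) is the complement of the line graph of H, then χ(G) = τ(H). -/

import Mathlib

open SimpleGraph

/-- `KG H` is the complement of the line graph of `H`: its vertices are the edges of `H`,
two of them being adjacent exactly when the corresponding edges of `H` are disjoint. -/
def KG {V : Type*} (H : SimpleGraph V) : SimpleGraph H.edgeSet where
  Adj e f := e ≠ f ∧ ∀ v, v ∈ (e : Sym2 V) → v ∉ (f : Sym2 V)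
  symm := by
    constructor
    rintro e f ⟨hne, h⟩
    exact ⟨hne.symm, fun v hvf hve => h v hve hvf⟩
  loopless := by
    constructor
    rintro e ⟨hne, -⟩
    exact hne rfl

/-- The chromatic number: least `n` such that `G` has a proper coloring with `n` colors. -/
noncomputable def chromNum {W : Type*} (G : SimpleGraph W) : ℕ :=
  sInf {n | G.Colorable n}

/-- A vertex cover: a set of vertices meeting every edge. -/
def IsVertexCover {V : Type*} (H : SimpleGraph V) (S : Set V) : Prop :=
  ∀ ⦃u v⦄, H.Adj u v → u ∈ S ∨ v ∈ S

/-- The vertex cover number. -/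
noncomputable def tauN {V : Type*} (H : SimpleGraph V) : ℕ :=
  sInf {n | ∃ S : Set V, _root_.IsVertexCover H S ∧ S.ncard = n}

/-- `H` has an induced co-claw: four vertices spanning exactly a triangle plus an
isolated vertex. -/
def HasInducedCoClaw {V : Type*} (H : SimpleGraph V) : Prop :=
  ∃ a b c d : V, d ≠ a ∧ d ≠ b ∧ d ≠ c ∧
    H.Adj a b ∧ H.Adj b c ∧ H.Adj a c ∧ ¬ H.Adj d a ∧ ¬ H.Adj d b ∧ ¬ H.Adj d c

/-- `H` has an induced butterfly: five vertices spanning exactly two triangles sharing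
exactly one vertex `x`. -/
def HasInducedButterfly {V : Type*} (H : SimpleGraph V) : Prop :=
  ∃ x a b d e : V, a ≠ d ∧ a ≠ e ∧ b ≠ d ∧ b ≠ e ∧
    H.Adj x a ∧ H.Adj x b ∧ H.Adj a b ∧
    H.Adj x d ∧ H.Adj x e ∧ H.Adj d e ∧
    ¬ H.Adj a d ∧ ¬ H.Adj a e ∧ ¬ H.Adj b d ∧ ¬ H.Adj b e


/-! ### Auxiliary machinery for the proof -/

namespace KGAux

variable {V : Type*}

/-- The set of the three edges of a triangle. -/
def tri (a b c : V) : Set (Sym2 V) := {s(a,b), s(a,c), s(b,c)}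

/-- A set of edges having a common vertex. -/
def EStar (C : Set (Sym2 V)) : Prop := ∃ x, ∀ e ∈ C, x ∈ e

/-- A pairwise intersecting set of edges. -/
def EInter (C : Set (Sym2 V)) : Prop := ∀ e ∈ C, ∀ f ∈ C, ∃ v, v ∈ e ∧ v ∈ f

/-- A cover of the edge set of `H` by `n` pairwise-intersecting classes. -/
def Good {n : ℕ} (H : SimpleGraph V) (F : Fin n → Set (Sym2 V)) : Prop :=
  (∀ i, F i ⊆ H.edgeSet) ∧ (∀ i, EInter (F i)) ∧ ∀ e ∈ H.edgeSet, ∃ i, e ∈ F i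

/-- Number of classes without a common vertex. -/
noncomputable def tc {n : ℕ} (F : Fin n → Set (Sym2 V)) : ℕ := {i | ¬ EStar (F i)}.ncard

lemma mem_tri {e : Sym2 V} {a b c : V} :
    e ∈ tri a b c ↔ e = s(a,b) ∨ e = s(a,c) ∨ e = s(b,c) := by simp [tri]

lemma tri_mem₁ {a b c : V} : s(a,b) ∈ tri a b c := by simp [tri]
lemma tri_mem₂ {a b c : V} : s(a,c) ∈ tri a b c := by simp [tri]
lemma tri_mem₃ {a b c : V} : s(b,c) ∈ tri a b c := by simp [tri]

lemma tri_swap₁ (a b c : V) : tri a b c = tri b a c := by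
  ext e
  rw [mem_tri, mem_tri, Sym2.eq_swap (a := b) (b := a)]
  tauto

lemma tri_swap₂ (a b c : V) : tri a b c = tri a c b := by
  ext e
  rw [mem_tri, mem_tri, Sym2.eq_swap (a := c) (b := b)]
  tauto

lemma EStar.einter {C : Set (Sym2 V)} (h : EStar C) : EInter C := by
  obtain ⟨x, hx⟩ := h; exact fun e he f hf => ⟨x, hx e he, hx f hf⟩

lemma edge_rep {H : SimpleGraph V} {e : Sym2 V} (he : e ∈ H.edgeSet) :
    ∃ u v, H.Adj u v ∧ e = s(u,v) := by
  induction e using Sym2.inductionOn with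
  | _ u v => exact ⟨u, v, he, rfl⟩

lemma tri_not_star {a b c : V} (hab : a ≠ b) (hac : a ≠ c) (hbc : b ≠ c) :
    ¬ EStar (tri a b c) := by
  rintro ⟨x, hx⟩
  have h1 := hx _ (show s(a,b) ∈ tri a b c by simp [tri])
  have h2 := hx _ (show s(a,c) ∈ tri a b c by simp [tri])
  have h3 := hx _ (show s(b,c) ∈ tri a b c by simp [tri])
  simp only [Sym2.mem_iff] at h1 h2 h3
  rcases h1 with rfl | rfl <;> rcases h2 with h2 | h2 <;> rcases h3 with h3 | h3 <;> tauto

lemma tri_reorder {x y d f g : V} (h : s(x,y) ∈ tri d f g) :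
    ∃ w, tri d f g = tri x y w := by
  rw [mem_tri] at h
  rcases h with h | h | h <;> rw [Sym2.eq_iff] at h <;>
    rcases h with ⟨rfl, rfl⟩ | ⟨rfl, rfl⟩
  · exact ⟨g, rfl⟩
  · exact ⟨g, tri_swap₁ _ _ _⟩
  · exact ⟨f, tri_swap₂ _ _ _⟩
  · exact ⟨f, by rw [tri_swap₂, tri_swap₁]⟩
  · exact ⟨d, by rw [tri_swap₁, tri_swap₂]⟩
  · exact ⟨d, by rw [tri_swap₂, tri_swap₁, tri_swap₂]⟩

lemma tc_lt' {n : ℕ} {F F' : Fin n → Set (Sym2 V)} {M : Set (Fin n)} {i0 : Fin n}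
    (hi0M : i0 ∈ M) (h0 : ¬ EStar (F i0)) (hM : ∀ i ∈ M, EStar (F' i))
    (hout : ∀ i ∉ M, F' i = F i) : tc F' < tc F := by
  apply Set.ncard_lt_ncard ?_ (Set.toFinite _)
  constructor
  · intro i hi
    simp only [Set.mem_setOf_eq] at hi ⊢
    by_cases hiM : i ∈ M
    · exact absurd (hM i hiM) hi
    · rwa [hout i hiM] at hi
  · intro hsub
    have := hsub (show i0 ∈ {i | ¬ EStar (F i)} from h0)
    exact this (hM i0 hi0M)

lemma exists_tri {H : SimpleGraph V} {C : Set (Sym2 V)} [Nonempty V]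
    (hsub : C ⊆ H.edgeSet) (hint : EInter C) (hns : ¬ EStar C) :
    ∃ a b c, H.Adj a b ∧ H.Adj a c ∧ H.Adj b c ∧ C = tri a b c := by
  rw [EStar] at hns; push_neg at hns
  obtain ⟨e1, he1C, -⟩ := hns (Classical.arbitrary V)
  obtain ⟨a, b, hab, rfl⟩ := edge_rep (hsub he1C)
  obtain ⟨e2, he2C, ha2⟩ := hns a
  have hb2 : b ∈ e2 := by
    obtain ⟨v, hv1, hv2⟩ := hint _ he1C _ he2C
    rcases Sym2.mem_iff.1 hv1 with rfl | rfl
    · exact absurd hv2 ha2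
    · exact hv2
  obtain ⟨c, rfl⟩ := Sym2.mem_iff_exists.1 hb2
  have hbc : H.Adj b c := hsub he2C
  have hca : c ≠ a := by rintro rfl; exact ha2 (Sym2.mem_mk_right _ _)
  obtain ⟨e3, he3C, hb3⟩ := hns b
  have ha3 : a ∈ e3 := by
    obtain ⟨v, hv1, hv2⟩ := hint _ he1C _ he3C
    rcases Sym2.mem_iff.1 hv1 with rfl | rfl
    · exact hv2
    · exact absurd hv2 hb3
  have hc3 : c ∈ e3 := by
    obtain ⟨v, hv1, hv2⟩ := hint _ he2C _ he3C
    rcases Sym2.mem_iff.1 hv1 with rfl | rfl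
    · exact absurd hv2 hb3
    · exact hv2
  have he3 : e3 = s(a,c) := (Sym2.mem_and_mem_iff hca.symm).1 ⟨ha3, hc3⟩
  subst he3
  refine ⟨a, b, c, hab, hsub he3C, hbc, ?_⟩
  ext e
  constructor
  · intro heC
    obtain ⟨v1, hv1e, hv11⟩ := hint _ heC _ he1C
    obtain ⟨v2, hv2e, hv22⟩ := hint _ heC _ he2C
    obtain ⟨v3, hv3e, hv33⟩ := hint _ heC _ he3C
    simp only [Sym2.mem_iff] at hv11 hv22 hv33
    simp only [tri, Set.mem_insert_iff, Set.mem_singleton_iff]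
    by_cases haE : a ∈ e
    · by_cases hbE : b ∈ e
      · exact Or.inl ((Sym2.mem_and_mem_iff hab.ne).1 ⟨haE, hbE⟩)
      · rcases hv22 with rfl | rfl
        · exact absurd hv2e hbE
        · exact Or.inr (Or.inl ((Sym2.mem_and_mem_iff hca.symm).1 ⟨haE, hv2e⟩))
    · have hbE : b ∈ e := by
        rcases hv11 with rfl | rfl
        · exact absurd hv1e haE
        · exact hv1e
      rcases hv33 with rfl | rfl
      · exact absurd hv3e haE
      · exact Or.inr (Or.inr ((Sym2.mem_and_mem_iff hbc.ne).1 ⟨hbE, hv3e⟩))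
  · intro he
    simp only [tri, Set.mem_insert_iff, Set.mem_singleton_iff] at he
    rcases he with rfl | rfl | rfl
    · exact he1C
    · exact he3C
    · exact he2C

lemma split2 {n : ℕ} {H : SimpleGraph V} {F : Fin n → Set (Sym2 V)} (hG : Good H F)
    {i0 j : Fin n} (hij : j ≠ i0) (h0 : ¬ EStar (F i0)) (α γ : V)
    (hγ : ∀ e ∈ F i0 ∪ F j, α ∉ e → γ ∈ e) :
    ∃ F' : Fin n → Set (Sym2 V), Good H F' ∧ tc F' < tc F := by
  classical
  set U : Set (Sym2 V) := F i0 ∪ F j with hU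
  set F' := Function.update (Function.update F j {e ∈ U | α ∈ e}) i0 {e ∈ U | α ∉ e}
    with hF'
  have hFj : F' j = {e ∈ U | α ∈ e} := by
    rw [hF', Function.update_of_ne hij, Function.update_self]
  have hFi0 : F' i0 = {e ∈ U | α ∉ e} := by rw [hF', Function.update_self]
  have hFo : ∀ i, i ≠ i0 → i ≠ j → F' i = F i := by
    intro i h1 h2
    rw [hF', Function.update_of_ne h1, Function.update_of_ne h2]
  have hUsub : U ⊆ H.edgeSet := Set.union_subset (hG.1 i0) (hG.1 j)
  have hstar0 : EStar (F' i0) := ⟨γ, fun e he => by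
    rw [hFi0] at he; exact hγ e he.1 he.2⟩
  have hstarj : EStar (F' j) := ⟨α, fun e he => by rw [hFj] at he; exact he.2⟩
  have hmem : ∀ e ∈ U, ∃ i, e ∈ F' i := by
    intro e he
    by_cases hα : α ∈ e
    · exact ⟨j, by rw [hFj]; exact ⟨he, hα⟩⟩
    · exact ⟨i0, by rw [hFi0]; exact ⟨he, hα⟩⟩
  refine ⟨F', ⟨?_, ?_, ?_⟩, ?_⟩
  · intro i
    by_cases h1 : i = i0
    · rw [h1, hFi0]; exact fun e he => hUsub he.1
    by_cases h2 : i = j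
    · rw [h2, hFj]; exact fun e he => hUsub he.1
    · rw [hFo i h1 h2]; exact hG.1 i
  · intro i
    by_cases h1 : i = i0
    · rw [h1]; exact hstar0.einter
    by_cases h2 : i = j
    · rw [h2]; exact hstarj.einter
    · rw [hFo i h1 h2]; exact hG.2.1 i
  · intro e he
    obtain ⟨i, hi⟩ := hG.2.2 e he
    by_cases h1 : i = i0
    · exact hmem e (Or.inl (h1 ▸ hi))
    by_cases h2 : i = j
    · exact hmem e (Or.inr (h2 ▸ hi))
    · exact ⟨i, by rw [hFo i h1 h2]; exact hi⟩
  · refine tc_lt' (M := {i0, j}) (by simp) h0 ?_ ?_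
    · intro i hi
      simp only [Set.mem_insert_iff, Set.mem_singleton_iff] at hi
      rcases hi with rfl | rfl
      · exact hstar0
      · exact hstarj
    · intro i hi
      simp only [Set.mem_insert_iff, Set.mem_singleton_iff, not_or] at hi
      exact hFo i hi.1 hi.2

lemma split3 {n : ℕ} {H : SimpleGraph V} {F : Fin n → Set (Sym2 V)} (hG : Good H F)
    {i0 j k : Fin n} (hji : j ≠ i0) (hki : k ≠ i0) (hkj : k ≠ j)
    (h0 : ¬ EStar (F i0)) (α β γ : V)
    (hγ : ∀ e ∈ F i0 ∪ F j ∪ F k, α ∉ e → β ∉ e → γ ∈ e) :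
    ∃ F' : Fin n → Set (Sym2 V), Good H F' ∧ tc F' < tc F := by
  classical
  set U : Set (Sym2 V) := F i0 ∪ F j ∪ F k with hU
  set F' := Function.update (Function.update (Function.update F k {e ∈ U | α ∉ e ∧ β ∉ e})
    j {e ∈ U | α ∉ e ∧ β ∈ e}) i0 {e ∈ U | α ∈ e} with hF'
  have hFi0 : F' i0 = {e ∈ U | α ∈ e} := by rw [hF', Function.update_self]
  have hFj : F' j = {e ∈ U | α ∉ e ∧ β ∈ e} := by
    rw [hF', Function.update_of_ne hji, Function.update_self]
  have hFk : F' k = {e ∈ U | α ∉ e ∧ β ∉ e} := by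
    rw [hF', Function.update_of_ne hki, Function.update_of_ne hkj, Function.update_self]
  have hFo : ∀ i, i ≠ i0 → i ≠ j → i ≠ k → F' i = F i := by
    intro i h1 h2 h3
    rw [hF', Function.update_of_ne h1, Function.update_of_ne h2, Function.update_of_ne h3]
  have hUsub : U ⊆ H.edgeSet :=
    Set.union_subset (Set.union_subset (hG.1 i0) (hG.1 j)) (hG.1 k)
  have hstar0 : EStar (F' i0) := ⟨α, fun e he => by rw [hFi0] at he; exact he.2⟩
  have hstarj : EStar (F' j) := ⟨β, fun e he => by rw [hFj] at he; exact he.2.2⟩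
  have hstark : EStar (F' k) := ⟨γ, fun e he => by
    rw [hFk] at he; exact hγ e he.1 he.2.1 he.2.2⟩
  have hmem : ∀ e ∈ U, ∃ i, e ∈ F' i := by
    intro e he
    by_cases hα : α ∈ e
    · exact ⟨i0, by rw [hFi0]; exact ⟨he, hα⟩⟩
    by_cases hβ : β ∈ e
    · exact ⟨j, by rw [hFj]; exact ⟨he, hα, hβ⟩⟩
    · exact ⟨k, by rw [hFk]; exact ⟨he, hα, hβ⟩⟩
  refine ⟨F', ⟨?_, ?_, ?_⟩, ?_⟩
  · intro i
    by_cases h1 : i = i0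
    · rw [h1, hFi0]; exact fun e he => hUsub he.1
    by_cases h2 : i = j
    · rw [h2, hFj]; exact fun e he => hUsub he.1
    by_cases h3 : i = k
    · rw [h3, hFk]; exact fun e he => hUsub he.1
    · rw [hFo i h1 h2 h3]; exact hG.1 i
  · intro i
    by_cases h1 : i = i0
    · rw [h1]; exact hstar0.einter
    by_cases h2 : i = j
    · rw [h2]; exact hstarj.einter
    by_cases h3 : i = k
    · rw [h3]; exact hstark.einter
    · rw [hFo i h1 h2 h3]; exact hG.2.1 i
  · intro e he
    obtain ⟨i, hi⟩ := hG.2.2 e he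
    by_cases h1 : i = i0
    · exact hmem e (Or.inl (Or.inl (h1 ▸ hi)))
    by_cases h2 : i = j
    · exact hmem e (Or.inl (Or.inr (h2 ▸ hi)))
    by_cases h3 : i = k
    · exact hmem e (Or.inr (h3 ▸ hi))
    · exact ⟨i, by rw [hFo i h1 h2 h3]; exact hi⟩
  · refine tc_lt' (M := {i0, j, k}) (by simp) h0 ?_ ?_
    · intro i hi
      simp only [Set.mem_insert_iff, Set.mem_singleton_iff] at hi
      rcases hi with rfl | rfl | rfl
      · exact hstar0
      · exact hstarj
      · exact hstark
    · intro i hi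
      simp only [Set.mem_insert_iff, Set.mem_singleton_iff, not_or] at hi
      exact hFo i hi.1 hi.2.1 hi.2.2

lemma case3' {n : ℕ} {H : SimpleGraph V} {F : Fin n → Set (Sym2 V)} (hG : Good H F)
    {i0 j : Fin n} (hji : j ≠ i0) (a b c p q : V)
    (hT : F i0 = tri a b c) (hJ : F j = tri a p q)
    (hpa : p ≠ a) (hpb : p ≠ b) (hpc : p ≠ c)
    (hqa : q ≠ a) (hqb : q ≠ b) (hqc : q ≠ c)
    (hadj : H.Adj p b)
    (hP1 : ∀ (k : Fin n) (x : V), (x = a ∨ x = b ∨ x = c) → ¬ ∀ e ∈ F k, x ∈ e) :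
    ∃ F' : Fin n → Set (Sym2 V), Good H F' ∧ tc F' < tc F := by
  have : Nonempty V := ⟨a⟩
  have hab : H.Adj a b := (H.mem_edgeSet).1 (hG.1 i0 (hT ▸ tri_mem₁))
  have hac : H.Adj a c := (H.mem_edgeSet).1 (hG.1 i0 (hT ▸ tri_mem₂))
  have hbc : H.Adj b c := (H.mem_edgeSet).1 (hG.1 i0 (hT ▸ tri_mem₃))
  have hpq : H.Adj p q := (H.mem_edgeSet).1 (hG.1 j (hJ ▸ tri_mem₃))
  have h0 : ¬ EStar (F i0) := hT ▸ tri_not_star hab.ne hac.ne hbc.ne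
  have he0 : s(p,b) ∈ H.edgeSet := hadj
  obtain ⟨k, hk⟩ := hG.2.2 _ he0
  have hki : k ≠ i0 := by
    rintro rfl
    rw [hT, mem_tri] at hk
    rcases hk with h | h | h <;> rw [Sym2.eq_iff] at h <;>
      rcases h with ⟨h1, h2⟩ | ⟨h1, h2⟩
    · exact hpa h1
    · exact hpb h1
    · exact hpa h1
    · exact hpc h1
    · exact hpb h1
    · exact hpc h1
  have hkj : k ≠ j := by
    rintro rfl
    rw [hJ, mem_tri] at hk
    rcases hk with h | h | h <;> rw [Sym2.eq_iff] at h <;>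
      rcases h with ⟨h1, h2⟩ | ⟨h1, h2⟩
    · exact hpa h1
    · exact hab.ne' h2
    · exact hpa h1
    · exact hab.ne' h2
    · exact hqb h2.symm
    · exact hpq.ne h1
  by_cases hks : EStar (F k)
  · obtain ⟨v, hv⟩ := hks
    have hvm : v ∈ s(p,b) := hv _ hk
    rcases Sym2.mem_iff.1 hvm with h | h
    · have hv' : ∀ e ∈ F k, p ∈ e := h ▸ hv
      refine split3 hG hji hki hkj h0 p a b ?_
      intro e he hp' ha'
      rcases he with (he | he) | he
      · rw [hT, mem_tri] at he
        rcases he with rfl | rfl | rfl <;>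
          simp only [Sym2.mem_iff] at hp' ha' ⊢ <;> tauto
      · rw [hJ, mem_tri] at he
        rcases he with rfl | rfl | rfl <;>
          simp only [Sym2.mem_iff] at hp' ha' ⊢ <;> tauto
      · exact absurd (hv' e he) hp'
    · exact absurd hv (hP1 k v (Or.inr (Or.inl h)))
  · obtain ⟨d, f, g, -, -, -, hk'⟩ := exists_tri (hG.1 k) (hG.2.1 k) hks
    obtain ⟨w, hw⟩ := tri_reorder (x := p) (y := b) (hk' ▸ hk)
    have hFk : F k = tri p b w := by rw [hk', hw]
    refine split3 hG hji hki hkj h0 a p b ?_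
    intro e he ha' hp'
    rcases he with (he | he) | he
    · rw [hT, mem_tri] at he
      rcases he with rfl | rfl | rfl <;>
        simp only [Sym2.mem_iff] at hp' ha' ⊢ <;> tauto
    · rw [hJ, mem_tri] at he
      rcases he with rfl | rfl | rfl <;>
        simp only [Sym2.mem_iff] at hp' ha' ⊢ <;> tauto
    · rw [hFk, mem_tri] at he
      rcases he with rfl | rfl | rfl <;>
        simp only [Sym2.mem_iff] at hp' ha' ⊢ <;> tauto

lemma case3 {n : ℕ} {H : SimpleGraph V} {F : Fin n → Set (Sym2 V)} (hG : Good H F)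
    (hbf : ¬ HasInducedButterfly H)
    {i0 j : Fin n} (hji : j ≠ i0) (a b c p q : V)
    (hT : F i0 = tri a b c) (hJ : F j = tri a p q)
    (hpa : p ≠ a) (hpb : p ≠ b) (hpc : p ≠ c)
    (hqa : q ≠ a) (hqb : q ≠ b) (hqc : q ≠ c)
    (hP1 : ∀ (k : Fin n) (x : V), (x = a ∨ x = b ∨ x = c) → ¬ ∀ e ∈ F k, x ∈ e) :
    ∃ F' : Fin n → Set (Sym2 V), Good H F' ∧ tc F' < tc F := by
  have hab : H.Adj a b := (H.mem_edgeSet).1 (hG.1 i0 (hT ▸ tri_mem₁))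
  have hac : H.Adj a c := (H.mem_edgeSet).1 (hG.1 i0 (hT ▸ tri_mem₂))
  have hbc : H.Adj b c := (H.mem_edgeSet).1 (hG.1 i0 (hT ▸ tri_mem₃))
  have hap : H.Adj a p := (H.mem_edgeSet).1 (hG.1 j (hJ ▸ tri_mem₁))
  have haq : H.Adj a q := (H.mem_edgeSet).1 (hG.1 j (hJ ▸ tri_mem₂))
  have hpq : H.Adj p q := (H.mem_edgeSet).1 (hG.1 j (hJ ▸ tri_mem₃))
  have hdisj : H.Adj b p ∨ H.Adj b q ∨ H.Adj c p ∨ H.Adj c q := by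
    by_contra hcon
    push_neg at hcon
    exact hbf ⟨a, b, c, p, q, fun h => hpb h.symm, fun h => hqb h.symm,
      fun h => hpc h.symm, fun h => hqc h.symm,
      hab, hac, hbc, hap, haq, hpq, hcon.1, hcon.2.1, hcon.2.2.1, hcon.2.2.2⟩
  rcases hdisj with h | h | h | h
  · exact case3' hG hji a b c p q hT hJ hpa hpb hpc hqa hqb hqc h.symm hP1
  · exact case3' hG hji a b c q p hT (by rw [hJ, tri_swap₂]) hqa hqb hqc hpa hpb hpc
      h.symm hP1
  · exact case3' hG hji a c b p q (by rw [hT, tri_swap₂]) hJ hpa hpc hpb hqa hqc hqb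
      h.symm (fun k x hx => hP1 k x (by tauto))
  · exact case3' hG hji a c b q p (by rw [hT, tri_swap₂]) (by rw [hJ, tri_swap₂])
      hqa hqc hqb hpa hpc hpb h.symm (fun k x hx => hP1 k x (by tauto))

lemma allstar {n : ℕ} {H : SimpleGraph V} {F : Fin n → Set (Sym2 V)} (hG : Good H F)
    (hall : ∀ i, EStar (F i)) :
    ∃ S : Set V, _root_.IsVertexCover H S ∧ S.ncard ≤ n := by
  classical
  choose x hx using hall
  refine ⟨Set.range x, ?_, ?_⟩
  · intro p r hpr
    have he : s(p,r) ∈ H.edgeSet := hpr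
    obtain ⟨i, hi⟩ := hG.2.2 _ he
    rcases Sym2.mem_iff.1 (hx i _ hi) with h | h
    · exact Or.inl ⟨i, h⟩
    · exact Or.inr ⟨i, h⟩
  · calc (Set.range x).ncard = (x '' Set.univ).ncard := by rw [Set.image_univ]
      _ ≤ (Set.univ : Set (Fin n)).ncard := Set.ncard_image_le (Set.toFinite _)
      _ = n := by rw [Set.ncard_univ, Nat.card_eq_fintype_card, Fintype.card_fin]

lemma key {H : SimpleGraph V} [Fintype V]
    (hnc : ∃ u v : V, u ≠ v ∧ ¬ H.Adj u v)
    (hcc : ¬ HasInducedCoClaw H) (hbf : ¬ HasInducedButterfly H) (n : ℕ) :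
    ∀ (N : ℕ) (F : Fin n → Set (Sym2 V)), Good H F → tc F ≤ N →
      ∃ S : Set V, _root_.IsVertexCover H S ∧ S.ncard ≤ n := by
  classical
  obtain ⟨u, v, huv, hnadj⟩ := hnc
  have hVne : Nonempty V := ⟨u⟩
  intro N
  induction N with
  | zero =>
    intro F hG htc
    refine allstar hG fun i => ?_
    by_contra hns
    have : i ∈ {i | ¬ EStar (F i)} := hns
    rw [Nat.le_zero] at htc
    rw [tc, Set.ncard_eq_zero (Set.toFinite _)] at htc
    rw [htc] at this
    exact this
  | succ N ih =>
    intro F hG htc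
    by_cases hall : ∀ i, EStar (F i)
    · exact allstar hG hall
    push_neg at hall
    obtain ⟨i0, hi0⟩ := hall
    obtain ⟨a, b, c, hab, hac, hbc, hT⟩ := exists_tri (hG.1 i0) (hG.2.1 i0) hi0
    have finish : (∃ F' : Fin n → Set (Sym2 V), Good H F' ∧ tc F' < tc F) →
        ∃ S : Set V, _root_.IsVertexCover H S ∧ S.ncard ≤ n := by
      rintro ⟨F', hG', hlt⟩
      exact ih F' hG' (by omega)
    by_cases hP1 : ∃ (k : Fin n) (x : V), (x = a ∨ x = b ∨ x = c) ∧ ∀ e ∈ F k, x ∈ e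
    · obtain ⟨k, x, hx, hcom⟩ := hP1
      have hki : k ≠ i0 := by rintro rfl; exact hi0 ⟨x, hcom⟩
      apply finish
      rcases hx with rfl | rfl | rfl
      · refine split2 hG hki hi0 x b ?_
        intro e he hα
        rcases he with he | he
        · rw [hT, mem_tri] at he
          rcases he with rfl | rfl | rfl <;> simp only [Sym2.mem_iff] at hα ⊢ <;> tauto
        · exact absurd (hcom e he) hα
      · refine split2 hG hki hi0 x a ?_
        intro e he hα
        rcases he with he | he
        · rw [hT, mem_tri] at he
          rcases he with rfl | rfl | rfl <;> simp only [Sym2.mem_iff] at hα ⊢ <;> tauto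
        · exact absurd (hcom e he) hα
      · refine split2 hG hki hi0 x a ?_
        intro e he hα
        rcases he with he | he
        · rw [hT, mem_tri] at he
          rcases he with rfl | rfl | rfl <;> simp only [Sym2.mem_iff] at hα ⊢ <;> tauto
        · exact absurd (hcom e he) hα
    by_cases hP2 : ∃ k, k ≠ i0 ∧ ∃ w, F k = tri a b w ∨ F k = tri a c w ∨ F k = tri b c w
    · obtain ⟨k, hki, w, hw⟩ := hP2
      apply finish
      rcases hw with hw | hw | hw
      · refine split2 hG hki hi0 a b ?_
        intro e he hα
        rcases he with he | he
        · rw [hT, mem_tri] at he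
          rcases he with rfl | rfl | rfl <;> simp only [Sym2.mem_iff] at hα ⊢ <;> tauto
        · rw [hw, mem_tri] at he
          rcases he with rfl | rfl | rfl <;> simp only [Sym2.mem_iff] at hα ⊢ <;> tauto
      · refine split2 hG hki hi0 a c ?_
        intro e he hα
        rcases he with he | he
        · rw [hT, mem_tri] at he
          rcases he with rfl | rfl | rfl <;> simp only [Sym2.mem_iff] at hα ⊢ <;> tauto
        · rw [hw, mem_tri] at he
          rcases he with rfl | rfl | rfl <;> simp only [Sym2.mem_iff] at hα ⊢ <;> tauto
      · refine split2 hG hki hi0 b c ?_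
        intro e he hα
        rcases he with he | he
        · rw [hT, mem_tri] at he
          rcases he with rfl | rfl | rfl <;> simp only [Sym2.mem_iff] at hα ⊢ <;> tauto
        · rw [hw, mem_tri] at he
          rcases he with rfl | rfl | rfl <;> simp only [Sym2.mem_iff] at hα ⊢ <;> tauto
    by_cases hP3 : ∃ k, k ≠ i0 ∧ ∃ p q, ¬(p = a ∨ p = b ∨ p = c) ∧ ¬(q = a ∨ q = b ∨ q = c) ∧
        (F k = tri a p q ∨ F k = tri b p q ∨ F k = tri c p q)
    · obtain ⟨k, hki, p, q, hp, hq, hw⟩ := hP3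
      push_neg at hp hq
      apply finish
      have hP1' : ∀ (k : Fin n) (x : V), (x = a ∨ x = b ∨ x = c) → ¬ ∀ e ∈ F k, x ∈ e :=
        fun k x hx hcom => hP1 ⟨k, x, hx, hcom⟩
      rcases hw with hw | hw | hw
      · exact case3 hG hbf hki a b c p q hT hw hp.1 hp.2.1 hp.2.2 hq.1 hq.2.1 hq.2.2 hP1'
      · exact case3 hG hbf hki b a c p q (by rw [hT, tri_swap₁]) hw hp.2.1 hp.1 hp.2.2
          hq.2.1 hq.1 hq.2.2 (fun k x hx => hP1' k x (by tauto))
      · exact case3 hG hbf hki c a b p q (by rw [hT, tri_swap₂, tri_swap₁]) hw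
          hp.2.2 hp.1 hp.2.1 hq.2.2 hq.1 hq.2.1 (fun k x hx => hP1' k x (by tauto))
    · -- terminal case: every vertex outside the triangle is a private star center
      have hout : ∀ x : V, ¬(x = a ∨ x = b ∨ x = c) →
          ∃ k : Fin n, k ≠ i0 ∧ (∀ e ∈ F k, x ∈ e) ∧
            ∃ t, (t = a ∨ t = b ∨ t = c) ∧ s(x,t) ∈ F k := by
        intro x hx
        have hx' : x ≠ a ∧ x ≠ b ∧ x ≠ c := by push_neg at hx; exact hx
        have hadj : H.Adj x a ∨ H.Adj x b ∨ H.Adj x c := by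
          by_contra hcon
          push_neg at hcon
          exact hcc ⟨a, b, c, x, hx'.1, hx'.2.1, hx'.2.2, hab, hbc, hac,
            hcon.1, hcon.2.1, hcon.2.2⟩
        obtain ⟨t, ht, hxt⟩ : ∃ t, (t = a ∨ t = b ∨ t = c) ∧ H.Adj x t := by
          rcases hadj with h | h | h
          exacts [⟨a, Or.inl rfl, h⟩, ⟨b, Or.inr (Or.inl rfl), h⟩,
            ⟨c, Or.inr (Or.inr rfl), h⟩]
        have he : s(x,t) ∈ H.edgeSet := hxt
        obtain ⟨k, hk⟩ := hG.2.2 _ he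
        have hki : k ≠ i0 := by
          rintro rfl
          rw [hT, mem_tri] at hk
          rcases hk with h | h | h <;> rw [Sym2.eq_iff] at h <;>
            rcases h with ⟨h1, h2⟩ | ⟨h1, h2⟩ <;> tauto
        by_cases hks : EStar (F k)
        · obtain ⟨w, hw⟩ := hks
          rcases Sym2.mem_iff.1 (hw _ hk) with h | h
          · exact ⟨k, hki, h ▸ hw, t, ht, hk⟩
          · exact absurd hw (fun hc => hP1 ⟨k, w, by subst h; exact ht, hc⟩)
        · obtain ⟨d, f, g, -, -, -, hk'⟩ := exists_tri (hG.1 k) (hG.2.1 k) hks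
          obtain ⟨w, hw⟩ := tri_reorder (x := x) (y := t) (hk' ▸ hk)
          have hFk : F k = tri x t w := by rw [hk', hw]
          have htw : H.Adj t w := (H.mem_edgeSet).1 (hG.1 k (hFk ▸ tri_mem₃))
          by_cases hwabc : w = a ∨ w = b ∨ w = c
          · exfalso
            apply hP2
            refine ⟨k, hki, x, ?_⟩
            have h2 : F k = tri t w x := by rw [hFk, tri_swap₁, tri_swap₂]
            rcases ht with rfl | rfl | rfl <;> rcases hwabc with rfl | rfl | rfl
            · exact absurd rfl htw.ne
            · exact Or.inl h2
            · exact Or.inr (Or.inl h2)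
            · exact Or.inl (by rw [h2, tri_swap₁])
            · exact absurd rfl htw.ne
            · exact Or.inr (Or.inr h2)
            · exact Or.inr (Or.inl (by rw [h2, tri_swap₁]))
            · exact Or.inr (Or.inr (by rw [h2, tri_swap₁]))
            · exact absurd rfl htw.ne
          · exfalso
            apply hP3
            refine ⟨k, hki, x, w, hx, hwabc, ?_⟩
            have h2 : F k = tri t x w := by rw [hFk, tri_swap₁]
            rcases ht with rfl | rfl | rfl
            exacts [Or.inl h2, Or.inr (Or.inl h2), Or.inr (Or.inr h2)]
      choose k_ hki_ hcom_ t_ ht_ hmem_ using hout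
      set A : Finset V := {a, b, c} with hA
      have hmemA : ∀ x : V, x ∈ A ↔ (x = a ∨ x = b ∨ x = c) := by
        intro x; simp [hA]
      have hcardA : A.card = 3 := by
        rw [hA]
        rw [Finset.card_insert_of_notMem (by simp [hab.ne, hac.ne]),
          Finset.card_insert_of_notMem (by simp [hbc.ne]), Finset.card_singleton]
      have hle : (Aᶜ : Finset V).card ≤ (Finset.univ.erase i0).card := by
        apply Finset.card_le_card_of_injOn
          (fun x => if h : ¬(x = a ∨ x = b ∨ x = c) then k_ x h else i0)
        · intro x hxA
          have hx : ¬(x = a ∨ x = b ∨ x = c) := by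
            rw [← hmemA]; exact Finset.mem_compl.1 hxA
          simp only [dif_pos hx]
          exact Finset.mem_erase.2 ⟨hki_ x hx, Finset.mem_univ _⟩
        · intro x hxA y hyA hfxy
          have hx : ¬(x = a ∨ x = b ∨ x = c) := by
            rw [← hmemA]; exact Finset.mem_compl.1 hxA
          have hy : ¬(y = a ∨ y = b ∨ y = c) := by
            rw [← hmemA]; exact Finset.mem_compl.1 hyA
          simp only [dif_pos hx, dif_pos hy] at hfxy
          have h1 : s(x, t_ x hx) ∈ F (k_ y hy) := hfxy ▸ hmem_ x hx
          have h2 : y ∈ s(x, t_ x hx) := hcom_ y hy _ h1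
          rcases Sym2.mem_iff.1 h2 with h | h
          · exact h.symm
          · refine absurd ?_ hy
            rcases ht_ x hx with h' | h' | h'
            · exact Or.inl (h.trans h')
            · exact Or.inr (Or.inl (h.trans h'))
            · exact Or.inr (Or.inr (h.trans h'))
      have hcompl : (Aᶜ : Finset V).card = Fintype.card V - 3 := by
        rw [Finset.card_compl, hcardA]
      have herase : (Finset.univ.erase i0).card = n - 1 := by
        rw [Finset.card_erase_of_mem (Finset.mem_univ _), Finset.card_univ, Fintype.card_fin]
      have hn1 : 1 ≤ n := i0.pos
      refine ⟨Set.univ \ {u, v}, ?_, ?_⟩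
      · intro p r hpr
        have hne : p ≠ r := hpr.ne
        by_contra hcon
        push_neg at hcon
        obtain ⟨h1, h2⟩ := hcon
        simp only [Set.mem_diff, Set.mem_univ, true_and, Set.mem_insert_iff,
          Set.mem_singleton_iff, not_not] at h1 h2
        rcases h1 with rfl | rfl <;> rcases h2 with rfl | rfl
        · exact hne rfl
        · exact hnadj hpr
        · exact hnadj hpr.symm
        · exact hne rfl
      · have hcard : (Set.univ \ {u, v} : Set V).ncard = Fintype.card V - 2 := by
          rw [Set.ncard_diff (Set.subset_univ _), Set.ncard_univ,
            Nat.card_eq_fintype_card, Set.ncard_pair huv]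
        omega

end KGAux

/-- If `H` is not complete, has no induced co-claw and no induced butterfly, then the
chromatic number of the complement of its line graph equals its vertex cover number. -/
theorem chromNum_KG_eq_tau {V : Type*} [Fintype V] (H : SimpleGraph V)
    (hnc : ∃ u v : V, u ≠ v ∧ ¬ H.Adj u v)
    (hcc : ¬ HasInducedCoClaw H) (hbf : ¬ HasInducedButterfly H) :
    chromNum (KG H) = tauN H := by
  classical
  apply le_antisymm
  · -- χ ≤ τ : a minimum vertex cover induces a coloring by stars
    have hne' : {m | ∃ S : Set V, _root_.IsVertexCover H S ∧ S.ncard = m}.Nonempty :=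
      ⟨Set.univ.ncard, Set.univ, fun _ _ _ => Or.inl trivial, rfl⟩
    obtain ⟨S, hS, hScard⟩ : ∃ S : Set V, _root_.IsVertexCover H S ∧ S.ncard = tauN H :=
      Nat.sInf_mem hne'
    have hpick : ∀ e : H.edgeSet, ∃ x, x ∈ S ∧ x ∈ (e : Sym2 V) := by
      rintro ⟨e, he⟩
      obtain ⟨p, r, hpr, rfl⟩ := KGAux.edge_rep he
      rcases hS hpr with h | h
      · exact ⟨p, h, Sym2.mem_mk_left _ _⟩
      · exact ⟨r, h, Sym2.mem_mk_right _ _⟩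
    choose f hf1 hf2 using hpick
    have hvalid : ∀ {e₁ e₂ : H.edgeSet}, (KG H).Adj e₁ e₂ →
        (⟨f e₁, hf1 e₁⟩ : S) ≠ ⟨f e₂, hf1 e₂⟩ := by
      intro e₁ e₂ hadj heq
      obtain ⟨-, hdisj⟩ := hadj
      rw [Subtype.mk_eq_mk] at heq
      exact hdisj (f e₁) (hf2 e₁) (heq ▸ hf2 e₂)
    letI : Fintype S := Fintype.ofFinite _
    have hcol : (KG H).Colorable (Fintype.card S) :=
      (Coloring.mk (fun e => (⟨f e, hf1 e⟩ : S)) hvalid).colorable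
    have hcard : Fintype.card S = tauN H := by
      rw [← Nat.card_eq_fintype_card, Nat.card_coe_set_eq, hScard]
    exact Nat.sInf_le (by rw [← hcard]; exact hcol)
  · -- τ ≤ χ : an optimal coloring of `KG H` yields a small vertex cover
    have hEfin : Finite H.edgeSet := by
      have : Finite (Sym2 V) := Finite.of_surjective (fun p : V × V => s(p.1, p.2))
        (fun z => by induction z using Sym2.inductionOn with
          | _ x y => exact ⟨(x, y), rfl⟩)
      exact Subtype.finite
    letI : Fintype H.edgeSet := Fintype.ofFinite _
    have hne' : {m | (KG H).Colorable m}.Nonempty :=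
      ⟨Fintype.card H.edgeSet, (KG H).colorable_of_fintype⟩
    have hcolmem : (KG H).Colorable (chromNum (KG H)) := Nat.sInf_mem hne'
    obtain ⟨C⟩ := hcolmem
    set n := chromNum (KG H) with hn
    set F : Fin n → Set (Sym2 V) := fun i => {e | ∃ h : e ∈ H.edgeSet, C ⟨e, h⟩ = i}
      with hF
    have hG : KGAux.Good H F := by
      refine ⟨?_, ?_, ?_⟩
      · rintro i e ⟨h, -⟩
        exact h
      · rintro i e ⟨he, hce⟩ g ⟨hg, hcg⟩
        by_cases heg : e = g
        · obtain ⟨p, r, -, rfl⟩ := KGAux.edge_rep he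
          exact ⟨p, Sym2.mem_mk_left _ _, heg ▸ Sym2.mem_mk_left _ _⟩
        · by_contra hcon
          push_neg at hcon
          have hadj : (KG H).Adj ⟨e, he⟩ ⟨g, hg⟩ :=
            ⟨by simp [Subtype.mk_eq_mk, heg], fun x hxe hxg => hcon x hxe hxg⟩
          exact C.valid hadj (by rw [hce, hcg])
      · intro e he
        exact ⟨C ⟨e, he⟩, he, rfl⟩
    obtain ⟨S, hS, hScard⟩ := KGAux.key hnc hcc hbf n (KGAux.tc F) F hG le_rfl
    exact le_trans (Nat.sInf_le ⟨S, hS, rfl⟩) hScard
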